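/- Let p > 0 and let T_p be the LSV map. Let ρ : [0,1] → [0,∞) be Lebesgue-integrable and suppose the measure ρ·Leb is T_p-invariant, i.e. the pushforward of ρ·Leb under T_p equals ρ·Leb. Then for Lebesgue-almost every x ∈ [0,1], ρ(x) = ρ(g_p^{-1}(x)) / (1 + 2^p (p+1) (g_p^{-1}(x))^p) + (1/2) ρ((x+1)/2). -/

import Mathlib

open Set MeasureTheory

/-- The LSV map `T_p`. -/
noncomputable def lsvMap (p : ℝ) (x : ℝ) : ℝ :=
  if x < 1 / 2 then x + 2 ^ p * x ^ (p + 1) else 2 * x - 1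

open scoped ENNReal

private noncomputable def lsvG (p : ℝ) : ℝ → ℝ := fun y => y + 2 ^ p * y ^ (p + 1)
private noncomputable def lsvD (p : ℝ) : ℝ → ℝ := fun y => 1 + 2 ^ p * (p + 1) * y ^ p

private lemma lsv_hasDerivAt (p : ℝ) (hp : 0 < p) (x : ℝ) :
    HasDerivAt (lsvG p) (lsvD p x) x := by
  have h : HasDerivAt (fun y : ℝ => y ^ (p + 1)) ((p + 1) * x ^ ((p + 1) - 1)) x :=
    Real.hasDerivAt_rpow_const (Or.inr (by linarith))
  have h2 := (hasDerivAt_id x).add (h.const_mul ((2:ℝ) ^ p))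
  have he : (1 : ℝ) + 2 ^ p * ((p + 1) * x ^ ((p + 1) - 1)) = lsvD p x := by
    rw [add_sub_cancel_right, lsvD]; ring
  rw [← he]
  exact h2

private lemma lsvG_zero (p : ℝ) (hp : 0 < p) : lsvG p 0 = 0 := by
  simp [lsvG, Real.zero_rpow (by linarith : p + 1 ≠ 0)]

private lemma lsvG_mono (p : ℝ) (hp : 0 < p) : StrictMonoOn (lsvG p) (Ici 0) := by
  intro u hu v hv huv
  have : u ^ (p + 1) ≤ v ^ (p + 1) := Real.rpow_le_rpow hu huv.le (by linarith)
  have h2p : (0:ℝ) < 2 ^ p := Real.rpow_pos_of_pos two_pos p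
  simp only [lsvG]
  nlinarith

private lemma lsvG_nonneg (p : ℝ) (hp : 0 < p) {y : ℝ} (hy : 0 ≤ y) : 0 ≤ lsvG p y := by
  have h2p : (0:ℝ) ≤ 2 ^ p := (Real.rpow_pos_of_pos two_pos p).le
  have := Real.rpow_nonneg hy (p + 1)
  simp only [lsvG]
  nlinarith

private lemma lsvD_pos (p : ℝ) (hp : 0 < p) {y : ℝ} (hy : 0 ≤ y) : 0 < lsvD p y := by
  have h2p : (0:ℝ) ≤ 2 ^ p := (Real.rpow_pos_of_pos two_pos p).le
  have h3 := mul_nonneg (mul_nonneg h2p (by linarith : (0:ℝ) ≤ p + 1)) (Real.rpow_nonneg hy p)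
  simp only [lsvD]
  linarith

private lemma lsvG_cont (p : ℝ) (hp : 0 < p) : Continuous (lsvG p) :=
  continuous_iff_continuousAt.mpr fun x => (lsv_hasDerivAt p hp x).continuousAt

private lemma lsvG_image (p : ℝ) (hp : 0 < p) {t : ℝ} (ht : 0 ≤ t) :
    lsvG p '' Icc 0 t = Icc 0 (lsvG p t) := by
  apply Subset.antisymm
  · have := ((lsvG_mono p hp).monotoneOn.mono
      (Icc_subset_Ici_self : Icc (0:ℝ) t ⊆ Ici 0)).image_Icc_subset
    rwa [lsvG_zero p hp] at this
  · have := intermediate_value_Icc ht (lsvG_cont p hp).continuousOn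
    rwa [lsvG_zero p hp] at this

private lemma null_image {f f' : ℝ → ℝ} (hf : ∀ x, HasDerivAt f (f' x) x) {s : Set ℝ}
    (hs : MeasurableSet s) (h0 : volume s = 0) : volume (f '' s) = 0 := by
  have h := MeasureTheory.addHaar_image_le_lintegral_abs_det_fderiv volume hs
    (f' := fun x => ContinuousLinearMap.smulRight (1 : ℝ →L[ℝ] ℝ) (f' x))
    (fun x _ => (hf x).hasFDerivAt.hasFDerivWithinAt)
  rw [setLIntegral_measure_zero _ _ h0] at h
  exact le_antisymm h zero_le

private lemma lintegral_image_eq' {s : Set ℝ} {f f' : ℝ → ℝ} (hs : MeasurableSet s)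
    (hf' : ∀ x ∈ s, HasDerivWithinAt f (f' x) s x) (hf : Set.InjOn f s) (g : ℝ → ℝ≥0∞) :
    ∫⁻ x in f '' s, g x = ∫⁻ x in s, ENNReal.ofReal |f' x| * g (f x) := by
  simpa only [ContinuousLinearMap.det_toSpanSingleton] using
    MeasureTheory.lintegral_image_eq_lintegral_abs_det_fderiv_mul volume hs
      (fun x hx => (hf' x hx).hasFDerivWithinAt) hf g

theorem stmt16 (p : ℝ) (hp : 0 < p) (ginv : ℝ → ℝ)
    (hginv : ∀ x ∈ Icc (0 : ℝ) 1,
      ginv x ∈ Icc (0 : ℝ) (1 / 2) ∧ ginv x + 2 ^ p * (ginv x) ^ (p + 1) = x)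
    (ρ : ℝ → ℝ) (hρ_nonneg : ∀ x, 0 ≤ ρ x)
    (hρ_int : IntegrableOn ρ (Icc (0 : ℝ) 1))
    (hinv : Measure.map (lsvMap p)
        ((volume.restrict (Icc (0 : ℝ) 1)).withDensity (fun x => ENNReal.ofReal (ρ x)))
      = (volume.restrict (Icc (0 : ℝ) 1)).withDensity (fun x => ENNReal.ofReal (ρ x))) :
    ∀ᵐ x ∂(volume.restrict (Icc (0 : ℝ) 1)),
      ρ x = ρ (ginv x) / (1 + 2 ^ p * (p + 1) * (ginv x) ^ p)
        + (1 / 2) * ρ ((x + 1) / 2) := by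
  set μ := volume.restrict (Icc (0:ℝ) 1) with hμ
  set ν := μ.withDensity (fun x => ENNReal.ofReal (ρ x)) with hν
  -- basic facts about ginv
  have hginv1 : ∀ x ∈ Icc (0:ℝ) 1, lsvG p (ginv x) = x := fun x hx => (hginv x hx).2
  have hginvm : ∀ x ∈ Icc (0:ℝ) 1, ginv x ∈ Icc (0:ℝ) (1/2) := fun x hx => (hginv x hx).1
  have hmono : ∀ x ∈ Icc (0:ℝ) 1, ∀ y ∈ Icc (0:ℝ) 1, x ≤ y → ginv x ≤ ginv y := by
    intro x hx y hy hxy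
    by_contra hlt
    push_neg at hlt
    have := lsvG_mono p hp (mem_Ici.mpr (hginvm y hy).1) (mem_Ici.mpr (hginvm x hx).1) hlt
    rw [hginv1 x hx, hginv1 y hy] at this
    linarith
  have hcomp : ∀ y : ℝ, 0 ≤ y → lsvG p y ≤ 1 → ginv (lsvG p y) = y := by
    intro y h0 h1
    have hmem : lsvG p y ∈ Icc (0:ℝ) 1 := ⟨lsvG_nonneg p hp h0, h1⟩
    exact (lsvG_mono p hp).injOn (mem_Ici.mpr (hginvm _ hmem).1) (mem_Ici.mpr h0)
      (hginv1 _ hmem)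
  have hTmeas : Measurable (lsvMap p) := by
    have h1 : Measurable (lsvG p) := (lsvG_cont p hp).measurable
    have h2 : Measurable (fun x : ℝ => 2 * x - 1) := by fun_prop
    unfold lsvMap
    exact Measurable.ite (measurableSet_lt measurable_id measurable_const) h1 h2
  have happly : ∀ (f : ℝ → ℝ≥0∞) (s : Set ℝ), MeasurableSet s →
      μ.withDensity f s = ∫⁻ x in s ∩ Icc (0:ℝ) 1, f x ∂volume := by
    intro f s hs
    rw [withDensity_apply _ hs, hμ, Measure.restrict_restrict hs]
  -- the key identity from invariance
  have key : ∀ a ∈ Icc (0:ℝ) 1,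
      (∫⁻ x in Icc (0:ℝ) a, ENNReal.ofReal (ρ x) ∂volume)
        = (∫⁻ x in Icc (0:ℝ) (ginv a), ENNReal.ofReal (ρ x) ∂volume)
          + ∫⁻ x in Icc (1/2:ℝ) ((a+1)/2), ENNReal.ofReal (ρ x) ∂volume := by
    intro a ha
    have hpre : lsvMap p ⁻¹' Icc 0 a ∩ Icc (0:ℝ) 1
        = (Icc (0:ℝ) (ginv a) ∩ Iio (1/2)) ∪ Icc (1/2:ℝ) ((a+1)/2) := by
      ext x
      simp only [mem_inter_iff, mem_preimage, mem_Icc, mem_union, mem_Iio, lsvMap]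
      by_cases hx : x < 1/2
      · simp only [if_pos hx]
        constructor
        · rintro ⟨⟨hg0, hga⟩, hx0, hx1⟩
          left
          refine ⟨⟨hx0, ?_⟩, hx⟩
          have hle : lsvG p x ≤ a := hga
          rw [← hginv1 a ha] at hle
          exact ((lsvG_mono p hp).le_iff_le (mem_Ici.mpr hx0)
            (mem_Ici.mpr (hginvm a ha).1)).mp hle
        · rintro (⟨⟨hx0, hxle⟩, -⟩ | ⟨hhalf, -⟩)
          · have h1 : lsvG p x ≤ lsvG p (ginv a) :=
              (lsvG_mono p hp).monotoneOn (mem_Ici.mpr hx0)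
                (mem_Ici.mpr (hginvm a ha).1) hxle
            rw [hginv1 a ha] at h1
            exact ⟨⟨lsvG_nonneg p hp hx0, h1⟩, hx0, by linarith⟩
          · exact absurd hhalf (not_le.mpr hx)
      · simp only [if_neg hx]
        push_neg at hx
        have ha1 := ha.2
        constructor
        · rintro ⟨⟨h1, h2⟩, h3, h4⟩
          right
          constructor <;> linarith
        · rintro (⟨-, hlt⟩ | ⟨h1, h2⟩)
          · exact absurd hlt (not_lt.mpr hx)
          · refine ⟨⟨by linarith, by linarith⟩, by linarith, by linarith⟩
    have hdisj : Disjoint (Icc (0:ℝ) (ginv a) ∩ Iio (1/2)) (Icc (1/2:ℝ) ((a+1)/2)) :=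
      Set.disjoint_left.mpr fun x hx1 hx2 => absurd hx2.1 (not_le.mpr hx1.2)
    have e1 : ν (Icc 0 a) = ∫⁻ x in Icc (0:ℝ) a, ENNReal.ofReal (ρ x) ∂volume := by
      rw [hν, happly _ _ measurableSet_Icc,
        inter_eq_left.mpr (Icc_subset_Icc_right ha.2)]
    have e2 : ν (Icc 0 a) = ν (lsvMap p ⁻¹' Icc 0 a) := by
      conv_lhs => rw [← hinv]
      rw [Measure.map_apply hTmeas measurableSet_Icc]
    have e3 : ν (lsvMap p ⁻¹' Icc 0 a)
        = (∫⁻ x in Icc (0:ℝ) (ginv a) ∩ Iio (1/2), ENNReal.ofReal (ρ x) ∂volume)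
          + ∫⁻ x in Icc (1/2:ℝ) ((a+1)/2), ENNReal.ofReal (ρ x) ∂volume := by
      rw [hν, happly _ _ (hTmeas measurableSet_Icc), hpre,
        lintegral_union measurableSet_Icc hdisj]
    have e4 : (∫⁻ x in Icc (0:ℝ) (ginv a) ∩ Iio (1/2), ENNReal.ofReal (ρ x) ∂volume)
        = ∫⁻ x in Icc (0:ℝ) (ginv a), ENNReal.ofReal (ρ x) ∂volume := by
      apply setLIntegral_congr
      rw [MeasureTheory.ae_eq_set]
      constructor
      · exact measure_mono_null (fun x hx => (hx.2 hx.1.1).elim) measure_empty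
      · refine measure_mono_null ?_ (Real.volume_singleton (a := (1/2:ℝ)))
        rintro x ⟨hx1, hx2⟩
        have hle : x ≤ 1/2 := hx1.2.trans (hginvm a ha).2
        have hnlt : ¬ x < 1/2 := fun h => hx2 ⟨hx1, h⟩
        have : x = 1/2 := le_antisymm hle (not_lt.mp hnlt)
        exact this
    rw [← e1, e2, e3, e4]
  -- change of variables for the first branch
  have hCoV1 : ∀ a ∈ Icc (0:ℝ) 1,
      (∫⁻ x in Icc (0:ℝ) a,
          ENNReal.ofReal (ρ (ginv x) / (1 + 2 ^ p * (p + 1) * (ginv x) ^ p)) ∂volume)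
        = ∫⁻ x in Icc (0:ℝ) (ginv a), ENNReal.ofReal (ρ x) ∂volume := by
    intro a ha
    have hc := hginvm a ha
    have himg : lsvG p '' Icc 0 (ginv a) = Icc 0 a := by
      rw [lsvG_image p hp hc.1, hginv1 a ha]
    rw [← himg, lintegral_image_eq' measurableSet_Icc
      (fun y _ => (lsv_hasDerivAt p hp y).hasDerivWithinAt)
      ((lsvG_mono p hp).injOn.mono Icc_subset_Ici_self)]
    apply setLIntegral_congr_fun measurableSet_Icc
    intro y hy
    dsimp only
    have hy0 : (0:ℝ) ≤ y := hy.1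
    have hgy1 : lsvG p y ≤ 1 := by
      have h1 : lsvG p y ≤ lsvG p (ginv a) :=
        (lsvG_mono p hp).monotoneOn (mem_Ici.mpr hy0) (mem_Ici.mpr hc.1) hy.2
      rw [hginv1 a ha] at h1
      exact h1.trans ha.2
    have hcy : ginv (lsvG p y) = y := hcomp y hy0 hgy1
    have hD := lsvD_pos p hp hy0
    rw [hcy, abs_of_pos hD, ← ENNReal.ofReal_mul hD.le]
    congr 1
    have hDne : lsvD p y ≠ 0 := ne_of_gt hD
    show lsvD p y * (ρ y / lsvD p y) = ρ y
    field_simp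
  -- change of variables for the second branch
  have hCoV2 : ∀ a ∈ Icc (0:ℝ) 1,
      (∫⁻ x in Icc (0:ℝ) a, ENNReal.ofReal (1/2 * ρ ((x+1)/2)) ∂volume)
        = ∫⁻ x in Icc (1/2:ℝ) ((a+1)/2), ENNReal.ofReal (ρ x) ∂volume := by
    intro a ha
    have himg : (fun x : ℝ => (x+1)/2) '' Icc 0 a = Icc (1/2) ((a+1)/2) := by
      apply Subset.antisymm
      · have hm : Monotone (fun x : ℝ => (x+1)/2) := fun u v huv => by dsimp; linarith
        have := hm.image_Icc_subset (a := 0) (b := a)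
        simpa using this
      · have hcont : ContinuousOn (fun x : ℝ => (x+1)/2) (Icc 0 a) := by fun_prop
        have := intermediate_value_Icc ha.1 hcont
        simpa using this
    have hder : ∀ y ∈ Icc (0:ℝ) a, HasDerivWithinAt (fun x : ℝ => (x+1)/2) ((1:ℝ)/2) (Icc (0:ℝ) a) y := by
      intro y _
      have := (((hasDerivAt_id y).add_const 1).div_const 2).hasDerivWithinAt (s := Icc (0:ℝ) a)
      simpa using this
    rw [← himg, lintegral_image_eq' measurableSet_Icc hder
      (fun u _ v _ huv => by linarith)]
    apply lintegral_congr
    intro y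
    rw [ENNReal.ofReal_mul (by norm_num : (0:ℝ) ≤ 1/2),
      abs_of_pos (by norm_num : (0:ℝ) < 1/2)]
  -- measurability
  have hmemae : ∀ᵐ x ∂μ, x ∈ Icc (0:ℝ) 1 := by
    rw [hμ]; exact ae_restrict_mem measurableSet_Icc
  have hρm : AEMeasurable ρ μ := hρ_int.aemeasurable
  have hAmeas : Measurable (fun x : ℝ => (x+1)/2) := by fun_prop
  have hGmono : Monotone (fun x => ginv (max 0 (min x 1))) := by
    intro u v huv
    have hu : max 0 (min u 1) ∈ Icc (0:ℝ) 1 :=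
      ⟨le_max_left _ _, max_le zero_le_one (min_le_right _ _)⟩
    have hv : max 0 (min v 1) ∈ Icc (0:ℝ) 1 :=
      ⟨le_max_left _ _, max_le zero_le_one (min_le_right _ _)⟩
    exact hmono _ hu _ hv (max_le_max le_rfl (min_le_min huv le_rfl))
  have hGmeas : Measurable (fun x => ginv (max 0 (min x 1))) := hGmono.measurable
  have hGeq : ∀ x ∈ Icc (0:ℝ) 1, ginv (max 0 (min x 1)) = ginv x := by
    intro x hx
    rw [min_eq_left hx.2, max_eq_right hx.1]
  have hacG : Measure.map (fun x => ginv (max 0 (min x 1))) μ ≪ μ := by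
    refine Measure.AbsolutelyContinuous.mk fun s hs h0 => ?_
    rw [hμ, Measure.restrict_apply hs] at h0
    rw [Measure.map_apply hGmeas hs, hμ, Measure.restrict_apply (hGmeas hs)]
    have hsub : (fun x => ginv (max 0 (min x 1))) ⁻¹' s ∩ Icc (0:ℝ) 1
        ⊆ lsvG p '' (s ∩ Icc 0 (1/2)) := by
      rintro x ⟨hxs, hxI⟩
      rw [mem_preimage, hGeq x hxI] at hxs
      exact ⟨ginv x, ⟨hxs, hginvm x hxI⟩, hginv1 x hxI⟩
    refine measure_mono_null hsub
      (null_image (lsv_hasDerivAt p hp) (hs.inter measurableSet_Icc) ?_)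
    exact measure_mono_null
      (inter_subset_inter_right s (Icc_subset_Icc_right (by norm_num))) h0
  have hacA : Measure.map (fun x : ℝ => (x+1)/2) μ ≪ μ := by
    refine Measure.AbsolutelyContinuous.mk fun s hs h0 => ?_
    rw [hμ, Measure.restrict_apply hs] at h0
    rw [Measure.map_apply hAmeas hs, hμ, Measure.restrict_apply (hAmeas hs)]
    have hB : ∀ x : ℝ, HasDerivAt (fun y : ℝ => 2 * y - 1) 2 x := by
      intro x
      simpa using ((hasDerivAt_id x).const_mul 2).sub_const 1
    have hsub : (fun x : ℝ => (x+1)/2) ⁻¹' s ∩ Icc (0:ℝ) 1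
        ⊆ (fun y : ℝ => 2 * y - 1) '' (s ∩ Icc 0 1) := by
      rintro x ⟨hxs, hx0, hx1⟩
      exact ⟨(x+1)/2, ⟨hxs, ⟨by linarith, by linarith⟩⟩, by ring⟩
    exact measure_mono_null hsub (null_image hB (hs.inter measurableSet_Icc) h0)
  have m1 : AEMeasurable (fun x => ρ (ginv x)) μ := by
    have h := (hρm.mono_ac hacG).comp_aemeasurable hGmeas.aemeasurable
    refine h.congr ?_
    filter_upwards [hmemae] with x hx
    simp only [Function.comp_apply]
    rw [hGeq x hx]
  have hDmeas : Measurable (fun y : ℝ => (1 + 2 ^ p * (p + 1) * y ^ p)⁻¹) := by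
    have hc : Continuous (fun y : ℝ => y ^ p) := Real.continuous_rpow_const hp.le
    exact ((hc.measurable.const_mul _).const_add 1).inv
  have m2 : AEMeasurable (fun x => (1 + 2 ^ p * (p + 1) * (ginv x) ^ p)⁻¹) μ := by
    have h : AEMeasurable ((fun y : ℝ => (1 + 2 ^ p * (p + 1) * y ^ p)⁻¹)
        ∘ fun x => ginv (0 ⊔ x ⊓ 1)) μ := (hDmeas.comp hGmeas).aemeasurable
    refine h.congr ?_
    filter_upwards [hmemae] with x hx
    simp only [Function.comp_apply]
    rw [hGeq x hx]
  have m3 : AEMeasurable (fun x => ρ ((x+1)/2)) μ :=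
    (hρm.mono_ac hacA).comp_aemeasurable hAmeas.aemeasurable
  have mσ1 : AEMeasurable
      (fun x => ρ (ginv x) / (1 + 2 ^ p * (p + 1) * (ginv x) ^ p)) μ := by
    simpa [div_eq_mul_inv, Pi.mul_def] using m1.mul m2
  have mσ : AEMeasurable (fun x => ENNReal.ofReal
      (ρ (ginv x) / (1 + 2 ^ p * (p + 1) * (ginv x) ^ p) + 1/2 * ρ ((x+1)/2))) μ := by
    exact (mσ1.add (aemeasurable_const.mul m3)).ennreal_ofReal
  -- the main identity for all a ∈ [0,1]
  have hmain : ∀ a ∈ Icc (0:ℝ) 1,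
      (∫⁻ x in Icc (0:ℝ) a, ENNReal.ofReal (ρ x) ∂volume)
        = ∫⁻ x in Icc (0:ℝ) a, ENNReal.ofReal
            (ρ (ginv x) / (1 + 2 ^ p * (p + 1) * (ginv x) ^ p) + 1/2 * ρ ((x+1)/2)) ∂volume := by
    intro a ha
    have hsplit : (∫⁻ x in Icc (0:ℝ) a, ENNReal.ofReal
          (ρ (ginv x) / (1 + 2 ^ p * (p + 1) * (ginv x) ^ p) + 1/2 * ρ ((x+1)/2)) ∂volume)
        = ∫⁻ x in Icc (0:ℝ) a,
            (ENNReal.ofReal (ρ (ginv x) / (1 + 2 ^ p * (p + 1) * (ginv x) ^ p))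
              + ENNReal.ofReal (1/2 * ρ ((x+1)/2))) ∂volume := by
      apply setLIntegral_congr_fun measurableSet_Icc
      intro x hx
      dsimp only
      have hxI : x ∈ Icc (0:ℝ) 1 := ⟨hx.1, hx.2.trans ha.2⟩
      have h1 : 0 ≤ ρ (ginv x) / (1 + 2 ^ p * (p + 1) * (ginv x) ^ p) :=
        div_nonneg (hρ_nonneg _) (lsvD_pos p hp (hginvm x hxI).1).le
      rw [ENNReal.ofReal_add h1 (mul_nonneg (by norm_num) (hρ_nonneg _))]
    have hle : volume.restrict (Icc (0:ℝ) a) ≤ μ := by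
      rw [hμ]
      exact Measure.restrict_mono (Icc_subset_Icc_right ha.2) le_rfl
    rw [hsplit, lintegral_add_left' ((mσ1.mono_measure hle).ennreal_ofReal),
      hCoV1 a ha, hCoV2 a ha]
    exact key a ha
  -- conclude via measure extensionality
  haveI hfin : IsFiniteMeasure ν := by
    constructor
    rw [hν, withDensity_apply _ MeasurableSet.univ, setLIntegral_univ]
    exact (hasFiniteIntegral_iff_ofReal (Filter.Eventually.of_forall hρ_nonneg)).mp hρ_int.2
  set ν' := μ.withDensity (fun x => ENNReal.ofReal
      (ρ (ginv x) / (1 + 2 ^ p * (p + 1) * (ginv x) ^ p) + 1/2 * ρ ((x+1)/2))) with hν'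
  have hIic : ∀ r : ℝ, ν (Iic r) = ν' (Iic r) := by
    intro r
    rw [hν, hν', happly _ _ measurableSet_Iic, happly _ _ measurableSet_Iic]
    rcases lt_or_ge r 0 with hr | hr
    · have hempty : Iic r ∩ Icc (0:ℝ) 1 = ∅ := by
        ext x
        simp only [mem_inter_iff, mem_Iic, mem_Icc, mem_empty_iff_false, iff_false, not_and]
        intro h1 h2
        intro h3
        linarith
      rw [hempty]
      simp
    · have hset : Iic r ∩ Icc (0:ℝ) 1 = Icc 0 (min r 1) := by
        ext x
        simp only [mem_inter_iff, mem_Iic, mem_Icc, le_min_iff]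
        tauto
      have hmem : min r 1 ∈ Icc (0:ℝ) 1 := ⟨le_min hr zero_le_one, min_le_right _ _⟩
      rw [hset]
      exact hmain _ hmem
  have hνν' : ν = ν' := Measure.ext_of_Iic ν ν' hIic
  haveI : SigmaFinite μ := by rw [hμ]; infer_instance
  have hae := (withDensity_eq_iff_of_sigmaFinite hρm.ennreal_ofReal mσ).mp
    (by rw [← hν, ← hν']; exact hνν')
  filter_upwards [hae, hmemae] with x hx hxI
  have h1 : 0 ≤ ρ (ginv x) / (1 + 2 ^ p * (p + 1) * (ginv x) ^ p) + 1/2 * ρ ((x+1)/2) :=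
    add_nonneg (div_nonneg (hρ_nonneg _) (lsvD_pos p hp (hginvm x hxI).1).le)
      (mul_nonneg (by norm_num) (hρ_nonneg _))
  exact (ENNReal.ofReal_eq_ofReal_iff (hρ_nonneg x) h1).mp hx
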